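/- For integers n > 1 and c with 1 < c < n and c dividing n, the sets A = { n^i : i ≥ 0 } and B = { n^{2i} : i ≥ 0 } ∪ { n^{2i}·c : i ≥ 0 } are inequivalent under truncated division: there are no r, r' ∈ ℕ with A/r = B/r'. -/

import Mathlib

/-- `S/r`: the image of `S ⊆ ℕ` under truncated division `m ↦ m / gcd(r,m)`. -/
def truncDiv (S : Set ℕ) (r : ℕ) : Set ℕ := (fun m => m / Nat.gcd r m) '' S

/-- Stabilization of `gcd r (n^m * t)` for `m ≥ r`, when every prime of `t` divides `n`. -/
private lemma aux_gcd_stab {n r t : ℕ} (hn : 1 < n) (hr : 0 < r) (ht : 0 < t)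
    (htn : ∀ p : ℕ, p.Prime → p ∣ t → p ∣ n) {m : ℕ} (hm : r ≤ m) :
    Nat.gcd r (n ^ m * t) = Nat.gcd r (n ^ r * t) := by
  have hn0 : n ≠ 0 := by omega
  apply Nat.dvd_antisymm
  · apply Nat.dvd_gcd (Nat.gcd_dvd_left _ _)
    set d := Nat.gcd r (n ^ m * t) with hd_def
    have hd0 : d ≠ 0 := (Nat.gcd_pos_of_pos_left _ hr).ne'
    have hnt0 : n ^ r * t ≠ 0 := by positivity
    rw [← Nat.factorization_le_iff_dvd hd0 hnt0]
    intro q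
    by_cases hq : q.Prime
    · by_cases hqd : q ∣ d
      · have hqn : q ∣ n := by
          have hqmt : q ∣ n ^ m * t := hqd.trans (Nat.gcd_dvd_right _ _)
          rcases (Nat.Prime.dvd_mul hq).mp hqmt with h | h
          · exact hq.dvd_of_dvd_pow h
          · exact htn q hq h
        have h1 : d.factorization q ≤ r.factorization q := by
          have := (Nat.factorization_le_iff_dvd hd0 hr.ne').mpr (Nat.gcd_dvd_left _ _)
          exact this q
        have h2 : r.factorization q < r := Nat.factorization_lt q hr.ne'
        have h3 : r ≤ (n ^ r * t).factorization q := by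
          rw [Nat.factorization_mul (pow_ne_zero _ hn0) ht.ne', Nat.factorization_pow]
          have hen : 1 ≤ n.factorization q := hq.factorization_pos_of_dvd hn0 hqn
          have : r ≤ r * n.factorization q := Nat.le_mul_of_pos_right _ hen
          simpa using this.trans (Nat.le_add_right _ _)
        omega
      · simp [Nat.factorization_eq_zero_of_not_dvd hqd]
    · simp [Nat.factorization_eq_zero_of_not_prime _ hq]
  · exact Nat.dvd_gcd (Nat.gcd_dvd_left _ _)
      ((Nat.gcd_dvd_right _ _).trans (mul_dvd_mul_right (pow_dvd_pow n hm) t))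

/-- The key arithmetic impossibility: `n^a · c · g' ≠ n^b · g''` for the stabilized gcds. -/
private lemma aux_key {n c r' : ℕ} (hn : 1 < n) (hc : 1 < c) (hcn : c < n) (hdvd : c ∣ n)
    (hr' : 0 < r') (a b : ℕ) :
    n ^ a * (c * Nat.gcd r' (n ^ r')) ≠ n ^ b * Nat.gcd r' (n ^ r' * c) := by
  intro heq
  have hn0 : n ≠ 0 := by omega
  have hc0 : c ≠ 0 := by omega
  set g' := Nat.gcd r' (n ^ r') with hg'def
  set g'' := Nat.gcd r' (n ^ r' * c) with hg''def
  have hg'0 : g' ≠ 0 := (Nat.gcd_pos_of_pos_left _ hr').ne'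
  have hg''0 : g'' ≠ 0 := (Nat.gcd_pos_of_pos_left _ hr').ne'
  -- stabilized gcds have valuation `v_q r'` at every prime `q ∣ n`
  have hG' : ∀ q : ℕ, q.Prime → q ∣ n → g'.factorization q = r'.factorization q := by
    intro q hq hqn
    rw [hg'def, Nat.factorization_gcd hr'.ne' (pow_ne_zero _ hn0), Finsupp.inf_apply,
      Nat.factorization_pow]
    have h2 : r'.factorization q < r' := Nat.factorization_lt q hr'.ne'
    have hen : 1 ≤ n.factorization q := hq.factorization_pos_of_dvd hn0 hqn
    have : r' ≤ r' * n.factorization q := Nat.le_mul_of_pos_right _ hen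
    simp only [Finsupp.smul_apply, smul_eq_mul]
    omega
  have hG'' : ∀ q : ℕ, q.Prime → q ∣ n → g''.factorization q = r'.factorization q := by
    intro q hq hqn
    rw [hg''def, Nat.factorization_gcd hr'.ne' (by positivity), Finsupp.inf_apply,
      Nat.factorization_mul (pow_ne_zero _ hn0) hc0, Nat.factorization_pow]
    have h2 : r'.factorization q < r' := Nat.factorization_lt q hr'.ne'
    have hen : 1 ≤ n.factorization q := hq.factorization_pos_of_dvd hn0 hqn
    have : r' ≤ r' * n.factorization q := Nat.le_mul_of_pos_right _ hen
    simp only [Finsupp.add_apply, Finsupp.smul_apply, smul_eq_mul]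
    omega
  -- pointwise equation at primes dividing n
  have hEq : ∀ q : ℕ, q.Prime → q ∣ n →
      a * n.factorization q + c.factorization q = b * n.factorization q := by
    intro q hq hqn
    have h := congrArg (fun f => f q) (congrArg Nat.factorization heq)
    simp only [Nat.factorization_mul (pow_ne_zero a hn0) (mul_ne_zero hc0 hg'0),
      Nat.factorization_mul (pow_ne_zero b hn0) hg''0,
      Nat.factorization_mul hc0 hg'0, Nat.factorization_pow,
      Finsupp.add_apply, Finsupp.smul_apply, smul_eq_mul] at h
    have h1 := hG' q hq hqn
    have h2 := hG'' q hq hqn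
    omega
  -- at the minimal prime of c, conclude b = a + 1
  set p := c.minFac with hp_def
  have hp : p.Prime := Nat.minFac_prime hc.ne'
  have hpc : p ∣ c := Nat.minFac_dvd c
  have hpn : p ∣ n := hpc.trans hdvd
  have hvc : 1 ≤ c.factorization p := hp.factorization_pos_of_dvd hc0 hpc
  have hvcn : c.factorization p ≤ n.factorization p :=
    (Nat.factorization_le_iff_dvd hc0 hn0).mpr hdvd p
  have hepos : 1 ≤ n.factorization p := le_trans hvc hvcn
  have hEp := hEq p hp hpn
  have hb : b = a + 1 := by
    have hab : a < b := by nlinarith [hEp]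
    rcases Nat.lt_or_ge b (a + 2) with h | h
    · omega
    · exfalso
      have : (a + 2) * n.factorization p ≤ b * n.factorization p :=
        Nat.mul_le_mul_right _ h
      nlinarith
  -- every prime has equal valuation in c and n, so c = n
  have : c = n := by
    apply Nat.eq_of_factorization_eq hc0 hn0
    intro q
    by_cases hq : q.Prime
    · by_cases hqn : q ∣ n
      · have h1 := hEq q hq hqn
        rw [hb] at h1
        have h2 : (a + 1) * n.factorization q = a * n.factorization q + n.factorization q := by
          ring
        omega
      · have hqc : ¬ q ∣ c := fun h => hqn (h.trans hdvd)
        rw [Nat.factorization_eq_zero_of_not_dvd hqc,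
          Nat.factorization_eq_zero_of_not_dvd hqn]
    · simp [Nat.factorization_eq_zero_of_not_prime _ hq]
  omega

/-- For `1 < c < n` with `c ∣ n`, the sets `A = {n^i}` and
`B = {n^{2i}} ∪ {n^{2i}·c}` are inequivalent under truncated division. -/
theorem depthProfiles_G1_G2_inequivalent (n c : ℕ) (hn : 1 < n)
    (hc : 1 < c) (hcn : c < n) (hdvd : c ∣ n) :
    ¬ ∃ r r' : ℕ, 0 < r ∧ 0 < r' ∧
      truncDiv {m | ∃ i : ℕ, m = n ^ i} r
        = truncDiv ({m | ∃ i : ℕ, m = n ^ (2 * i)} ∪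
            {m | ∃ i : ℕ, m = n ^ (2 * i) * c}) r' := by
  rintro ⟨r, r', hr, hr', heq⟩
  have hn0 : n ≠ 0 := by omega
  have hc0 : 0 < c := by omega
  have htriv : ∀ p : ℕ, p.Prime → p ∣ 1 → p ∣ n := by
    intro p hp h
    exact absurd (Nat.le_of_dvd one_pos h) (not_le.mpr hp.one_lt)
  have htc : ∀ p : ℕ, p.Prime → p ∣ c → p ∣ n := fun p _ h => h.trans hdvd
  -- stabilization lemmas in convenient form
  have stab1 : ∀ m : ℕ, r' ≤ m → Nat.gcd r' (n ^ m) = Nat.gcd r' (n ^ r') := by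
    intro m hm
    have := aux_gcd_stab hn hr' one_pos htriv hm
    simpa using this
  have stab2 : ∀ m : ℕ, r' ≤ m → Nat.gcd r' (n ^ m * c) = Nat.gcd r' (n ^ r' * c) :=
    fun m hm => aux_gcd_stab hn hr' hc0 htc hm
  have stabA : ∀ m : ℕ, r ≤ m → Nat.gcd r (n ^ m) = Nat.gcd r (n ^ r) := by
    intro m hm
    have := aux_gcd_stab hn hr one_pos htriv hm
    simpa using this
  set g := Nat.gcd r (n ^ r) with hg_def
  set g' := Nat.gcd r' (n ^ r') with hg'_def
  set g'' := Nat.gcd r' (n ^ r' * c) with hg''_def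
  have hgpos : 0 < g := Nat.gcd_pos_of_pos_left _ hr
  set K := r' + r + 2 with hK_def
  set I := r + 2 * K with hI_def
  have hgI : Nat.gcd r (n ^ I) = g := stabA I (by omega)
  have hgI1 : Nat.gcd r (n ^ (I + 1)) = g := stabA (I + 1) (by omega)
  have hgdvd : g ∣ n ^ I := hgI ▸ Nat.gcd_dvd_right r (n ^ I)
  set x := n ^ I / g with hx_def
  -- x and n*x belong to the left set
  have hxA : x ∈ truncDiv {m | ∃ i : ℕ, m = n ^ i} r := ⟨n ^ I, ⟨I, rfl⟩, by simp [hgI, hx_def]⟩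
  have hyA : n * x ∈ truncDiv {m | ∃ i : ℕ, m = n ^ i} r := by
    refine ⟨n ^ (I + 1), ⟨I + 1, rfl⟩, ?_⟩
    simp only [hgI1]
    rw [hx_def, pow_succ, mul_comm (n ^ I) n, Nat.mul_div_assoc n hgdvd]
  -- x is large
  have hxbig : n ^ (2 * K) ≤ x := by
    rw [hx_def, Nat.le_div_iff_mul_le hgpos]
    have h1 : g ≤ r := Nat.le_of_dvd hr (Nat.gcd_dvd_left _ _)
    have h2 : r ≤ n ^ r := le_of_lt (Nat.lt_pow_self hn : r < n ^ r)
    calc n ^ (2 * K) * g ≤ n ^ (2 * K) * n ^ r := Nat.mul_le_mul_left _ (h1.trans h2)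
      _ = n ^ I := by rw [← pow_add]; congr 1; omega
  have hybig : n ^ (2 * K) ≤ n * x :=
    hxbig.trans (Nat.le_mul_of_pos_left _ (by omega))
  -- analyze membership in the right set for large elements
  have analyze : ∀ z : ℕ, n ^ (2 * K) ≤ z →
      z ∈ truncDiv ({m | ∃ i : ℕ, m = n ^ (2 * i)} ∪
          {m | ∃ i : ℕ, m = n ^ (2 * i) * c}) r' →
      (∃ i, z * g' = n ^ (2 * i)) ∨ (∃ i, z * g'' = n ^ (2 * i) * c) := by
    rintro z hz ⟨m, hm | hm, rfl⟩
    · obtain ⟨i, rfl⟩ := hm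
      left
      have hle : n ^ (2 * K) ≤ n ^ (2 * i) := hz.trans (Nat.div_le_self _ _)
      have hKi : 2 * K ≤ 2 * i := (Nat.pow_le_pow_iff_right hn).mp hle
      have hstab : Nat.gcd r' (n ^ (2 * i)) = g' := stab1 (2 * i) (by omega)
      refine ⟨i, ?_⟩
      show n ^ (2 * i) / Nat.gcd r' (n ^ (2 * i)) * g' = n ^ (2 * i)
      rw [hstab, Nat.div_mul_cancel (hstab ▸ Nat.gcd_dvd_right r' (n ^ (2 * i)))]
    · obtain ⟨i, rfl⟩ := hm
      right
      have hle : n ^ (2 * K) ≤ n ^ (2 * i + 1) := by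
        refine hz.trans ((Nat.div_le_self _ _).trans ?_)
        rw [pow_succ]
        exact Nat.mul_le_mul_left _ (le_of_lt hcn)
      have hKi : 2 * K ≤ 2 * i + 1 := (Nat.pow_le_pow_iff_right hn).mp hle
      have hstab : Nat.gcd r' (n ^ (2 * i) * c) = g'' := stab2 (2 * i) (by omega)
      refine ⟨i, ?_⟩
      show n ^ (2 * i) * c / Nat.gcd r' (n ^ (2 * i) * c) * g'' = n ^ (2 * i) * c
      rw [hstab, Nat.div_mul_cancel (hstab ▸ Nat.gcd_dvd_right r' (n ^ (2 * i) * c))]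
  have hxB := analyze x hxbig (heq ▸ hxA)
  have hyB := analyze (n * x) hybig (heq ▸ hyA)
  have hpinj : Function.Injective (n ^ ·) := Nat.pow_right_injective hn
  rcases hxB with ⟨i, hxL⟩ | ⟨i, hxR⟩ <;> rcases hyB with ⟨j, hyL⟩ | ⟨j, hyR⟩
  · -- both plain: parity contradiction
    have : n ^ (2 * j) = n ^ (2 * i + 1) := by
      calc n ^ (2 * j) = n * x * g' := hyL.symm
        _ = n * (x * g') := by ring
        _ = n * n ^ (2 * i) := by rw [hxL]
        _ = n ^ (2 * i + 1) := by rw [pow_succ]; ring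
    have := hpinj this
    omega
  · -- x plain, n*x has c: key equation
    have key : n ^ (2 * j) * (c * g') = n ^ (2 * i + 1) * g'' := by
      calc n ^ (2 * j) * (c * g') = n ^ (2 * j) * c * g' := by ring
        _ = n * x * g'' * g' := by rw [hyR]
        _ = n * (x * g') * g'' := by ring
        _ = n * n ^ (2 * i) * g'' := by rw [hxL]
        _ = n ^ (2 * i + 1) * g'' := by rw [pow_succ]; ring
    exact aux_key hn hc hcn hdvd hr' (2 * j) (2 * i + 1) key
  · -- x has c, n*x plain: key equation
    have key : n ^ (2 * i + 1) * (c * g') = n ^ (2 * j) * g'' := by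
      calc n ^ (2 * i + 1) * (c * g') = n * (n ^ (2 * i) * c) * g' := by rw [pow_succ]; ring
        _ = n * (x * g'') * g' := by rw [hxR]
        _ = n * x * g' * g'' := by ring
        _ = n ^ (2 * j) * g'' := by rw [hyL]
    exact aux_key hn hc hcn hdvd hr' (2 * i + 1) (2 * j) key
  · -- both with c: parity contradiction
    have : n ^ (2 * j) * c = n ^ (2 * i + 1) * c := by
      calc n ^ (2 * j) * c = n * x * g'' := hyR.symm
        _ = n * (x * g'') := by ring
        _ = n * (n ^ (2 * i) * c) := by rw [hxR]
        _ = n ^ (2 * i + 1) * c := by rw [pow_succ]; ring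
    have h2 : n ^ (2 * j) = n ^ (2 * i + 1) := Nat.eq_of_mul_eq_mul_right hc0 this
    have := hpinj h2
    omega
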